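/- For all x, y ∈ Λ^ℓ V (with n = dim V): (1) Pf(J(x), y) = Λ^ℓ h(x, y); (2) Pf(x, J(y)) = (-1)^{(n-ℓ)ℓ} σ(Λ^ℓ h(x,y)); (3) Λ^ℓ h(J(x), y) = δ_ℓ · Pf(x, y); (4) Λ^ℓ h(J(x), J(y)) = (-1)^{(n-ℓ)ℓ} δ_ℓ · σ(Λ^ℓ h(x, y)). In particular J is a semi-similitude between Pf and Λ^ℓ h. -/

import Mathlib

open ExteriorAlgebra

/-- The wedge product of a family of vectors in the exterior algebra. -/
noncomputable def wedgeFam (F : Type*) {V : Type*} [Field F] [AddCommGroup V] [Module F V]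
    {k : ℕ} (u : Fin k → V) : ExteriorAlgebra F V :=
  (List.ofFn fun i => ExteriorAlgebra.ι F (u i)).prod

section Aux

variable {F V : Type*} [Field F] [AddCommGroup V] [Module F V]

private lemma ι_mul_ιMulti (m : V) : ∀ {b : ℕ} (w : Fin b → V),
    ι F m * ιMulti F b w = ((-1 : F) ^ b) • (ιMulti F b w * ι F m)
  | 0, w => by simp
  | b+1, w => by
    have hswap : ι F m * ι F (w 0) = -(ι F (w 0) * ι F m) :=
      eq_neg_of_add_eq_zero_left (ι_add_mul_swap m (w 0))
    rw [ιMulti_succ_apply, ← mul_assoc, hswap, neg_mul, mul_assoc,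
      ι_mul_ιMulti m (Matrix.vecTail w), mul_smul_comm, ← neg_smul, ← mul_assoc,
      pow_succ]
    congr 1
    ring

private lemma ι_mul_comm_ext (m : V) {b : ℕ} {y : ExteriorAlgebra F V} (hy : y ∈ ⋀[F]^b V) :
    ι F m * y = ((-1 : F) ^ b) • (y * ι F m) := by
  rw [← ιMulti_span_fixedDegree] at hy
  induction hy using Submodule.span_induction with
  | mem z hz => obtain ⟨w, rfl⟩ := hz; exact ι_mul_ιMulti m w
  | zero => simp
  | add z z' _ _ hz hz' => rw [mul_add, hz, hz', add_mul, smul_add]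
  | smul s z _ hz => rw [mul_smul_comm, hz, smul_comm, smul_mul_assoc]

private lemma ιMulti_mul_comm {b : ℕ} {y : ExteriorAlgebra F V} (hy : y ∈ ⋀[F]^b V) :
    ∀ {a : ℕ} (u : Fin a → V),
    ιMulti F a u * y = ((-1 : F) ^ (a * b)) • (y * ιMulti F a u)
  | 0, u => by simp
  | a+1, u => by
    rw [ιMulti_succ_apply, mul_assoc, ιMulti_mul_comm hy (Matrix.vecTail u),
      mul_smul_comm, ← mul_assoc, ι_mul_comm_ext (u 0) hy, smul_mul_assoc, smul_smul,
      mul_assoc, ← mul_assoc]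
    congr 1
    rw [← pow_add]
    congr 1
    ring

private lemma gradedComm {a b : ℕ} {x y : ExteriorAlgebra F V}
    (hx : x ∈ ⋀[F]^a V) (hy : y ∈ ⋀[F]^b V) :
    x * y = ((-1 : F) ^ (a * b)) • (y * x) := by
  rw [← ιMulti_span_fixedDegree] at hx
  induction hx using Submodule.span_induction with
  | mem z hz => obtain ⟨u, rfl⟩ := hz; exact ιMulti_mul_comm hy u
  | zero => simp
  | add z z' _ _ hz hz' => rw [add_mul, hz, hz', mul_add, smul_add]
  | smul s z _ hz => rw [smul_mul_assoc, hz, smul_comm, mul_smul_comm]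

private lemma exterior_mul_mem {a b : ℕ} {x y : ExteriorAlgebra F V}
    (hx : x ∈ ⋀[F]^a V) (hy : y ∈ ⋀[F]^b V) : x * y ∈ ⋀[F]^(a+b) V := by
  rw [exteriorPower, pow_add]
  exact Submodule.mul_mem_mul hx hy

end Aux

theorem hodge_semi_similitude
    {F V : Type*} [Field F] [AddCommGroup V] [Module F V] [FiniteDimensional F V]
    (n ℓ : ℕ) (hfr : Module.finrank F V = n) (hℓ : ℓ ≤ n)
    (σ : F ≃+* F) (hσ : ∀ a, σ (σ a) = a)
    (h : V → V → F)
    (h_add_left : ∀ u u' w, h (u + u') w = h u w + h u' w)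
    (h_add_right : ∀ u w w', h u (w + w') = h u w + h u w')
    (h_smul_left : ∀ (s : F) u w, h (s • u) w = σ s * h u w)
    (h_smul_right : ∀ (s : F) u w, h u (s • w) = s * h u w)
    (h_herm : ∀ u w, h w u = σ (h u w))
    (h_nondeg : ∀ u, (∀ w, h u w = 0) → u = 0)
    (v : Module.Basis (Fin n) F V)
    (h_orth : ∀ i j, i ≠ j → h (v i) (v j) = 0)
    (H : ExteriorAlgebra F V → ExteriorAlgebra F V → F)
    (H_add_left : ∀ x x' y, H (x + x') y = H x y + H x' y)
    (H_add_right : ∀ x y y', H x (y + y') = H x y + H x y')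
    (H_smul_left : ∀ (s : F) x y, H (s • x) y = σ s * H x y)
    (H_smul_right : ∀ (s : F) x y, H x (s • y) = s * H x y)
    (H_det : ∀ (k : ℕ) (u w : Fin k → V),
      H (wedgeFam F u) (wedgeFam F w) = Matrix.det (Matrix.of fun i j => h (u i) (w j)))
    (H_cross : ∀ (k m : ℕ), k ≠ m → ∀ x ∈ ⋀[F]^k V, ∀ y ∈ ⋀[F]^m V, H x y = 0)
    (b : ExteriorAlgebra F V →ₗ[F] F)
    (hb_inj : ∀ z ∈ ⋀[F]^n V, b z = 0 → z = 0)
    (hb_off : ∀ (k : ℕ), k ≠ n → ∀ z ∈ ⋀[F]^k V, b z = 0)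
    (J : ExteriorAlgebra F V → ExteriorAlgebra F V)
    (hJ_mem : ∀ x ∈ ⋀[F]^ℓ V, J x ∈ ⋀[F]^(n - ℓ) V)
    (hJ_char : ∀ x ∈ ⋀[F]^ℓ V, ∀ y ∈ ⋀[F]^ℓ V, b (J x * y) = H x y)
    (J' : ExteriorAlgebra F V → ExteriorAlgebra F V)
    (hJ'_mem : ∀ x ∈ ⋀[F]^(n - ℓ) V, J' x ∈ ⋀[F]^ℓ V)
    (hJ'_char : ∀ x ∈ ⋀[F]^(n - ℓ) V, ∀ y ∈ ⋀[F]^(n - ℓ) V, b (J' x * y) = H x y)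
    (δ : F) (hJsq : ∀ x ∈ ⋀[F]^ℓ V, J' (J x) = δ • x) :
    ∀ x ∈ ⋀[F]^ℓ V, ∀ y ∈ ⋀[F]^ℓ V,
      b (J x * y) = H x y ∧
      b (x * J y) = (-1 : F) ^ ((n - ℓ) * ℓ) * σ (H x y) ∧
      H (J x) y = δ * b (x * y) ∧
      H (J x) (J y) = (-1 : F) ^ ((n - ℓ) * ℓ) * δ * σ (H x y) := by
  -- H vanishes on 0 in either slot
  have H0l : ∀ y, H 0 y = 0 := fun y => by
    have := H_smul_left 0 0 y; simpa using this
  have H0r : ∀ x, H x 0 = 0 := fun x => by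
    have := H_smul_right 0 x 0; simpa using this
  -- Hermitian property of H on degree ℓ
  have Hherm : ∀ x ∈ ⋀[F]^ℓ V, ∀ y ∈ ⋀[F]^ℓ V, H y x = σ (H x y) := by
    intro x hx
    rw [← ιMulti_span_fixedDegree] at hx
    induction hx using Submodule.span_induction with
    | mem z hz =>
      obtain ⟨u, rfl⟩ := hz
      intro y hy
      rw [← ιMulti_span_fixedDegree] at hy
      induction hy using Submodule.span_induction with
      | mem z' hz' =>
        obtain ⟨w, rfl⟩ := hz'
        have e1 : ιMulti F ℓ u = wedgeFam F u := ιMulti_apply u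
        have e2 : ιMulti F ℓ w = wedgeFam F w := ιMulti_apply w
        rw [e1, e2, H_det, H_det]
        have hmat : (Matrix.of fun i j => h (w i) (u j)) =
            Matrix.transpose ((Matrix.of fun i j => h (u i) (w j)).map σ) := by
          ext i j
          simp only [Matrix.of_apply, Matrix.transpose_apply, Matrix.map_apply]
          exact h_herm (u j) (w i)
        rw [hmat, Matrix.det_transpose, ← RingEquiv.mapMatrix_apply,
          ← RingEquiv.map_det]
      | zero => rw [H0l, H0r, map_zero]
      | add z' z'' _ _ hz' hz'' =>
        rw [H_add_left, H_add_right, hz', hz'', map_add]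
      | smul s z' _ hz' =>
        rw [H_smul_left, H_smul_right, hz', map_mul]
    | zero => intro y hy; rw [H0l, H0r, map_zero]
    | add z z' hzm hzm' hz hz' =>
      intro y hy
      rw [H_add_left, H_add_right, hz y hy, hz' y hy, map_add]
    | smul s z hzm hz =>
      intro y hy
      rw [H_smul_left, H_smul_right, hz y hy, map_mul, hσ]
  intro x hx y hy
  have hJx := hJ_mem x hx
  have hJy := hJ_mem y hy
  have p1 := hJ_char x hx y hy
  -- (2)
  have p2 : b (x * J y) = (-1 : F) ^ ((n - ℓ) * ℓ) * σ (H x y) := by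
    rw [gradedComm hx hJy, map_smul, smul_eq_mul, hJ_char y hy x hx,
      Hherm x hx y hy, Nat.mul_comm]
  refine ⟨p1, p2, ?_, ?_⟩
  -- (3)
  · by_cases hcase : n - ℓ = ℓ
    · have hy' : y ∈ ⋀[F]^(n - ℓ) V := by rw [hcase]; exact hy
      have := hJ'_char (J x) hJx y hy'
      rw [hJsq x hx, smul_mul_assoc, map_smul, smul_eq_mul] at this
      exact this.symm
    · rw [H_cross (n - ℓ) ℓ hcase (J x) hJx y hy]
      have hmul : x * y ∈ ⋀[F]^(ℓ + ℓ) V := exterior_mul_mem hx hy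
      rw [hb_off (ℓ + ℓ) (by omega) (x * y) hmul, mul_zero]
  -- (4)
  · have := hJ'_char (J x) hJx (J y) hJy
    rw [hJsq x hx, smul_mul_assoc, map_smul, smul_eq_mul, p2] at this
    rw [← this]; ring
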